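/- If a standard balanced tableau R has entry i with i−1 directly related as follows: one of i−1, i+1 lies in the same column above i and the other lies in the same row to the right of i, then exchanging i−1 and i+1 yields again a standard balanced tableau. -/
import Mathlib


/-- The Coxeter length of `w`: the number of inversion pairs. -/
def invCount {n : ℕ} (w : Equiv.Perm (Fin n)) : ℕ :=
  (Finset.univ.filter fun p : Fin n × Fin n => p.1 < p.2 ∧ w p.2 < w p.1).card

/-- The Rothe diagram of `w` (0-indexed): the cells `(i, w j)` for inversions `i < j`,
`w j < w i`, as a subset of `ℕ × ℕ` (first coordinate the row, drawn with row `0` at the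
bottom so that "above" means larger first coordinate; second coordinate the column). -/
def RotheD (n : ℕ) (w : Equiv.Perm (Fin n)) : Finset (ℕ × ℕ) :=
  (Finset.univ.filter fun p : Fin n × Fin n => p.1 < p.2 ∧ w p.2 < w p.1).image
    fun p => ((p.1 : ℕ), (w p.2 : ℕ))

/-- A standard balanced tableau on a diagram `D`: a bijective filling of the cells of `D`
by `1, …, |D|` such that for every cell, the number of larger entries to its right in its
row equals the number of smaller entries above it in its column. -/
def IsSBT (D : Finset (ℕ × ℕ)) (T : ℕ × ℕ → ℕ) : Prop :=
  Set.InjOn T ↑D ∧ D.image T = Finset.Icc 1 D.card ∧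
  ∀ x ∈ D, (D.filter fun y => y.1 = x.1 ∧ x.2 < y.2 ∧ T x < T y).card
    = (D.filter fun y => y.2 = x.2 ∧ x.1 < y.1 ∧ T y < T x).card

/-- If one of `i-1`, `i+1` lies in the same column above `i` and the other lies in the
same row to the right of `i`, then exchanging `i-1` and `i+1` in a standard balanced
tableau yields a standard balanced tableau. -/
theorem sbt_yangBaxter (n : ℕ) (w : Equiv.Perm (Fin n)) (T : ℕ × ℕ → ℕ) (i : ℕ)
    (hT : IsSBT (RotheD n w) T) (hi : 2 ≤ i)
    (x y z : ℕ × ℕ) (hx : x ∈ RotheD n w) (hy : y ∈ RotheD n w) (hz : z ∈ RotheD n w)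
    (hTx : T x = i)
    (hvals : (T y = i - 1 ∧ T z = i + 1) ∨ (T y = i + 1 ∧ T z = i - 1))
    (hycol : y.2 = x.2) (hyabove : x.1 < y.1)
    (hzrow : z.1 = x.1) (hzright : x.2 < z.2) :
    IsSBT (RotheD n w)
      (fun u => if T u = i - 1 then i + 1 else if T u = i + 1 then i - 1 else T u) := by
  obtain ⟨hinj, himg, hbal⟩ := hT
  set D := RotheD n w with hD
  set f := Equiv.swap (i - 1) (i + 1) with hfdef
  have hswap : (fun u => if T u = i - 1 then i + 1 else if T u = i + 1 then i - 1 else T u)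
      = fun u => f (T u) := by
    funext u
    rw [hfdef, Equiv.swap_apply_def]
  rw [hswap]
  have hf1 : f (i - 1) = i + 1 := Equiv.swap_apply_left _ _
  have hf2 : f (i + 1) = i - 1 := Equiv.swap_apply_right _ _
  have hfi : f i = i := Equiv.swap_apply_of_ne_of_ne (by omega) (by omega)
  have hfother : ∀ t, t ≠ i - 1 → t ≠ i + 1 → f t = t :=
    fun t h1 h2 => Equiv.swap_apply_of_ne_of_ne h1 h2
  have hTyv : (T y = i - 1 ∧ f (T y) = i + 1) ∨ (T y = i + 1 ∧ f (T y) = i - 1) := by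
    rcases hvals with ⟨a, _⟩ | ⟨a, _⟩
    · exact Or.inl ⟨a, by rw [a]; exact hf1⟩
    · exact Or.inr ⟨a, by rw [a]; exact hf2⟩
  have hTzv : (T z = i - 1 ∧ f (T z) = i + 1) ∨ (T z = i + 1 ∧ f (T z) = i - 1) := by
    rcases hvals with ⟨_, b⟩ | ⟨_, b⟩
    · exact Or.inr ⟨b, by rw [b]; exact hf2⟩
    · exact Or.inl ⟨b, by rw [b]; exact hf1⟩
  have hother : ∀ d ∈ D, d ≠ x → d ≠ y → d ≠ z →
      T d ≠ i - 1 ∧ T d ≠ i ∧ T d ≠ i + 1 := by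
    intro d hd h1 h2 h3
    refine ⟨fun h => ?_, fun h => h1 (hinj hd hx (h.trans hTx.symm)), fun h => ?_⟩
    · rcases hvals with ⟨a, b⟩ | ⟨a, b⟩
      · exact h2 (hinj hd hy (h.trans a.symm))
      · exact h3 (hinj hd hz (h.trans b.symm))
    · rcases hvals with ⟨a, b⟩ | ⟨a, b⟩
      · exact h3 (hinj hd hz (h.trans b.symm))
      · exact h2 (hinj hd hy (h.trans a.symm))
  refine ⟨fun a ha b hb h => hinj ha hb (f.injective h), ?_, ?_⟩
  · -- image condition
    have h1 : D.image (fun u => f (T u)) = (D.image T).image f :=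
      (Finset.image_image).symm
    rw [h1, himg]
    have hy1 : T y ∈ Finset.Icc 1 D.card := by
      rw [← himg]; exact Finset.mem_image_of_mem T hy
    have hz1 : T z ∈ Finset.Icc 1 D.card := by
      rw [← himg]; exact Finset.mem_image_of_mem T hz
    have hm : i - 1 ∈ Finset.Icc 1 D.card ∧ i + 1 ∈ Finset.Icc 1 D.card := by
      rcases hvals with ⟨a, b⟩ | ⟨a, b⟩
      · exact ⟨by rw [← a]; exact hy1, by rw [← b]; exact hz1⟩
      · exact ⟨by rw [← b]; exact hz1, by rw [← a]; exact hy1⟩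
    have hmap : ∀ b ∈ Finset.Icc 1 D.card, f b ∈ Finset.Icc 1 D.card := by
      intro b hb
      by_cases hb1 : b = i - 1
      · rw [hb1, hf1]; exact hm.2
      by_cases hb2 : b = i + 1
      · rw [hb2, hf2]; exact hm.1
      · rw [hfother b hb1 hb2]; exact hb
    ext a
    simp only [Finset.mem_image]
    constructor
    · rintro ⟨b, hb, rfl⟩; exact hmap b hb
    · intro ha; exact ⟨f a, hmap a ha, Equiv.swap_apply_self _ _ _⟩
  · -- balance condition
    intro c hc
    show (D.filter fun d => d.1 = c.1 ∧ c.2 < d.2 ∧ f (T c) < f (T d)).card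
      = (D.filter fun d => d.2 = c.2 ∧ c.1 < d.1 ∧ f (T d) < f (T c)).card
    by_cases hcx : c = x
    · subst hcx
      have hb := hbal c hc
      simp only [hTx] at hb
      rw [show f (T c) = i by rw [hTx, hfi]]
      rcases hvals with ⟨hY, hZ⟩ | ⟨hY, hZ⟩
      · -- y has i-1 (above), z has i+1 (right): both counts drop by one
        have hzmem : z ∈ D.filter (fun d => d.1 = c.1 ∧ c.2 < d.2 ∧ i < T d) :=
          Finset.mem_filter.2 ⟨hz, hzrow, hzright, by omega⟩
        have hymem : y ∈ D.filter (fun d => d.2 = c.2 ∧ c.1 < d.1 ∧ T d < i) :=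
          Finset.mem_filter.2 ⟨hy, hycol, hyabove, by omega⟩
        have hrow : D.filter (fun d => d.1 = c.1 ∧ c.2 < d.2 ∧ i < f (T d))
            = (D.filter (fun d => d.1 = c.1 ∧ c.2 < d.2 ∧ i < T d)).erase z := by
          ext d
          simp only [Finset.mem_erase, Finset.mem_filter]
          constructor
          · rintro ⟨hd, h1, h2, h3⟩
            have hdz : d ≠ z := by rintro rfl; rw [hZ, hf2] at h3; omega
            have hdx : d ≠ c := by rintro rfl; omega
            have hdy : d ≠ y := by rintro rfl; omega
            obtain ⟨k1, _, k3⟩ := hother d hd hdx hdy hdz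
            rw [hfother _ k1 k3] at h3
            exact ⟨hdz, hd, h1, h2, h3⟩
          · rintro ⟨hdz, hd, h1, h2, h3⟩
            have hdx : d ≠ c := by rintro rfl; omega
            have hdy : d ≠ y := by rintro rfl; omega
            obtain ⟨k1, _, k3⟩ := hother d hd hdx hdy hdz
            exact ⟨hd, h1, h2, by rw [hfother _ k1 k3]; exact h3⟩
        have hcol : D.filter (fun d => d.2 = c.2 ∧ c.1 < d.1 ∧ f (T d) < i)
            = (D.filter (fun d => d.2 = c.2 ∧ c.1 < d.1 ∧ T d < i)).erase y := by
          ext d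
          simp only [Finset.mem_erase, Finset.mem_filter]
          constructor
          · rintro ⟨hd, h1, h2, h3⟩
            have hdy : d ≠ y := by rintro rfl; rw [hY, hf1] at h3; omega
            have hdx : d ≠ c := by rintro rfl; omega
            have hdz : d ≠ z := by rintro rfl; omega
            obtain ⟨k1, _, k3⟩ := hother d hd hdx hdy hdz
            rw [hfother _ k1 k3] at h3
            exact ⟨hdy, hd, h1, h2, h3⟩
          · rintro ⟨hdy, hd, h1, h2, h3⟩
            have hdx : d ≠ c := by rintro rfl; omega
            have hdz : d ≠ z := by rintro rfl; omega
            obtain ⟨k1, _, k3⟩ := hother d hd hdx hdy hdz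
            exact ⟨hd, h1, h2, by rw [hfother _ k1 k3]; exact h3⟩
        rw [hrow, hcol, Finset.card_erase_of_mem hzmem, Finset.card_erase_of_mem hymem, hb]
      · -- y has i+1 (above), z has i-1 (right): both counts grow by one
        have hznot : z ∉ D.filter (fun d => d.1 = c.1 ∧ c.2 < d.2 ∧ i < T d) := by
          simp only [Finset.mem_filter]
          rintro ⟨_, _, _, h⟩; omega
        have hynot : y ∉ D.filter (fun d => d.2 = c.2 ∧ c.1 < d.1 ∧ T d < i) := by
          simp only [Finset.mem_filter]
          rintro ⟨_, _, _, h⟩; omega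
        have hrow : D.filter (fun d => d.1 = c.1 ∧ c.2 < d.2 ∧ i < f (T d))
            = insert z (D.filter (fun d => d.1 = c.1 ∧ c.2 < d.2 ∧ i < T d)) := by
          ext d
          simp only [Finset.mem_insert, Finset.mem_filter]
          constructor
          · rintro ⟨hd, h1, h2, h3⟩
            by_cases hdz : d = z
            · exact Or.inl hdz
            have hdx : d ≠ c := by rintro rfl; omega
            have hdy : d ≠ y := by rintro rfl; omega
            obtain ⟨k1, _, k3⟩ := hother d hd hdx hdy hdz
            rw [hfother _ k1 k3] at h3
            exact Or.inr ⟨hd, h1, h2, h3⟩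
          · rintro (rfl | ⟨hd, h1, h2, h3⟩)
            · exact ⟨hz, hzrow, hzright, by rw [hZ, hf1]; omega⟩
            · have hdz : d ≠ z := by rintro rfl; omega
              have hdx : d ≠ c := by rintro rfl; omega
              have hdy : d ≠ y := by rintro rfl; omega
              obtain ⟨k1, _, k3⟩ := hother d hd hdx hdy hdz
              exact ⟨hd, h1, h2, by rw [hfother _ k1 k3]; exact h3⟩
        have hcol : D.filter (fun d => d.2 = c.2 ∧ c.1 < d.1 ∧ f (T d) < i)
            = insert y (D.filter (fun d => d.2 = c.2 ∧ c.1 < d.1 ∧ T d < i)) := by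
          ext d
          simp only [Finset.mem_insert, Finset.mem_filter]
          constructor
          · rintro ⟨hd, h1, h2, h3⟩
            by_cases hdy : d = y
            · exact Or.inl hdy
            have hdx : d ≠ c := by rintro rfl; omega
            have hdz : d ≠ z := by rintro rfl; omega
            obtain ⟨k1, _, k3⟩ := hother d hd hdx hdy hdz
            rw [hfother _ k1 k3] at h3
            exact Or.inr ⟨hd, h1, h2, h3⟩
          · rintro (rfl | ⟨hd, h1, h2, h3⟩)
            · exact ⟨hy, hycol, hyabove, by rw [hY, hf2]; omega⟩
            · have hdy : d ≠ y := by rintro rfl; omega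
              have hdx : d ≠ c := by rintro rfl; omega
              have hdz : d ≠ z := by rintro rfl; omega
              obtain ⟨k1, _, k3⟩ := hother d hd hdx hdy hdz
              exact ⟨hd, h1, h2, by rw [hfother _ k1 k3]; exact h3⟩
        rw [hrow, hcol, Finset.card_insert_of_notMem hznot,
          Finset.card_insert_of_notMem hynot, hb]
    by_cases hcy : c = y
    · subst hcy
      have hrow : D.filter (fun d => d.1 = c.1 ∧ c.2 < d.2 ∧ f (T c) < f (T d))
          = D.filter (fun d => d.1 = c.1 ∧ c.2 < d.2 ∧ T c < T d) := by
        refine Finset.filter_congr fun d hd => ?_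
        refine and_congr_right fun h1 => and_congr_right fun h2 => ?_
        have hdy : d ≠ c := by rintro rfl; omega
        have hdx : d ≠ x := by rintro rfl; omega
        have hdz : d ≠ z := by rintro rfl; omega
        obtain ⟨k1, k2, k3⟩ := hother d hd hdx hdy hdz
        rw [hfother _ k1 k3]
        rcases hTyv with ⟨a, b⟩ | ⟨a, b⟩ <;> rw [b, a] <;> omega
      have hcol : D.filter (fun d => d.2 = c.2 ∧ c.1 < d.1 ∧ f (T d) < f (T c))
          = D.filter (fun d => d.2 = c.2 ∧ c.1 < d.1 ∧ T d < T c) := by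
        refine Finset.filter_congr fun d hd => ?_
        refine and_congr_right fun h1 => and_congr_right fun h2 => ?_
        have hdy : d ≠ c := by rintro rfl; omega
        have hdx : d ≠ x := by rintro rfl; omega
        have hdz : d ≠ z := by rintro rfl; omega
        obtain ⟨k1, k2, k3⟩ := hother d hd hdx hdy hdz
        rw [hfother _ k1 k3]
        rcases hTyv with ⟨a, b⟩ | ⟨a, b⟩ <;> rw [b, a] <;> omega
      rw [hrow, hcol]
      exact hbal c hc
    by_cases hcz : c = z
    · subst hcz
      have hrow : D.filter (fun d => d.1 = c.1 ∧ c.2 < d.2 ∧ f (T c) < f (T d))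
          = D.filter (fun d => d.1 = c.1 ∧ c.2 < d.2 ∧ T c < T d) := by
        refine Finset.filter_congr fun d hd => ?_
        refine and_congr_right fun h1 => and_congr_right fun h2 => ?_
        have hdz : d ≠ c := by rintro rfl; omega
        have hdx : d ≠ x := by rintro rfl; omega
        have hdy : d ≠ y := by rintro rfl; omega
        obtain ⟨k1, k2, k3⟩ := hother d hd hdx hdy hdz
        rw [hfother _ k1 k3]
        rcases hTzv with ⟨a, b⟩ | ⟨a, b⟩ <;> rw [b, a] <;> omega
      have hcol : D.filter (fun d => d.2 = c.2 ∧ c.1 < d.1 ∧ f (T d) < f (T c))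
          = D.filter (fun d => d.2 = c.2 ∧ c.1 < d.1 ∧ T d < T c) := by
        refine Finset.filter_congr fun d hd => ?_
        refine and_congr_right fun h1 => and_congr_right fun h2 => ?_
        have hdz : d ≠ c := by rintro rfl; omega
        have hdx : d ≠ x := by rintro rfl; omega
        have hdy : d ≠ y := by rintro rfl; omega
        obtain ⟨k1, k2, k3⟩ := hother d hd hdx hdy hdz
        rw [hfother _ k1 k3]
        rcases hTzv with ⟨a, b⟩ | ⟨a, b⟩ <;> rw [b, a] <;> omega
      rw [hrow, hcol]
      exact hbal c hc
    · -- c is none of x, y, z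
      obtain ⟨k1, k2, k3⟩ := hother c hc hcx hcy hcz
      have hfc : f (T c) = T c := hfother _ k1 k3
      have hcmp : ∀ d ∈ D,
          (f (T c) < f (T d) ↔ T c < T d) ∧ (f (T d) < f (T c) ↔ T d < T c) := by
        intro d hd
        rw [hfc]
        by_cases hdx : d = x
        · subst hdx; rw [hTx, hfi]; exact ⟨Iff.rfl, Iff.rfl⟩
        by_cases hdy : d = y
        · subst hdy
          rcases hTyv with ⟨a, b⟩ | ⟨a, b⟩ <;> rw [b, a] <;> omega
        by_cases hdz : d = z
        · subst hdz
          rcases hTzv with ⟨a, b⟩ | ⟨a, b⟩ <;> rw [b, a] <;> omega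
        · obtain ⟨m1, _, m3⟩ := hother d hd hdx hdy hdz
          rw [hfother _ m1 m3]
          exact ⟨Iff.rfl, Iff.rfl⟩
      have hrow : D.filter (fun d => d.1 = c.1 ∧ c.2 < d.2 ∧ f (T c) < f (T d))
          = D.filter (fun d => d.1 = c.1 ∧ c.2 < d.2 ∧ T c < T d) :=
        Finset.filter_congr fun d hd =>
          and_congr_right fun _ => and_congr_right fun _ => (hcmp d hd).1
      have hcol : D.filter (fun d => d.2 = c.2 ∧ c.1 < d.1 ∧ f (T d) < f (T c))
          = D.filter (fun d => d.2 = c.2 ∧ c.1 < d.1 ∧ T d < T c) :=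
        Finset.filter_congr fun d hd =>
          and_congr_right fun _ => and_congr_right fun _ => (hcmp d hd).2
      rw [hrow, hcol]
      exact hbal c hc
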